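/- Let E be a finite-dimensional real normed vector space with geometric structure B, and let F, G : E → ℝ be differentiable. Suppose gF, gG are differentiable left-gradient fields of F, G, g a differentiable left-gradient field of F·G, and hF, hG differentiable right-gradient fields of F, G, h a differentiable right-gradient field of F·G, all with respect to B. Then for every x, trace(fderiv ℝ g x) − F x * trace(fderiv ℝ gG x) − G x * trace(fderiv ℝ gF x) = trace(fderiv ℝ h x) − F x * trace(fderiv ℝ hG x) − G x * trace(fderiv ℝ hF x); that is, Δ^L_B(FG) − F Δ^L_B G − G Δ^L_B F = Δ^R_B(FG) − F Δ^R_B G − G Δ^R_B F. -/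

import Mathlib

lemma my_trace_smulRight {E : Type*} [AddCommGroup E] [Module ℝ E] [Module.Finite ℝ E]
    [Module.Free ℝ E] (f : E →ₗ[ℝ] ℝ) (v : E) :
    LinearMap.trace ℝ E (f.smulRight v) = f v := by
  have h0 : f.smulRight v = dualTensorHom ℝ E E (f ⊗ₜ[ℝ] v) := rfl
  rw [h0, LinearMap.trace_eq_contract_apply, contractLeft_apply]

lemma my_trace_fderiv_smul {E : Type*} [NormedAddCommGroup E] [NormedSpace ℝ E]
    [FiniteDimensional ℝ E] (a : E → ℝ) (b : E → E)
    (ha : Differentiable ℝ a) (hb : Differentiable ℝ b) (x : E) :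
    LinearMap.trace ℝ E (fderiv ℝ (fun y => a y • b y) x).toLinearMap =
      fderiv ℝ a x (b x) + a x * LinearMap.trace ℝ E (fderiv ℝ b x).toLinearMap := by
  rw [fderiv_fun_smul (ha x) (hb x)]
  have h1 : ((a x • fderiv ℝ b x + (fderiv ℝ a x).smulRight (b x)).toLinearMap) =
      a x • (fderiv ℝ b x).toLinearMap + ((fderiv ℝ a x).toLinearMap).smulRight (b x) := rfl
  rw [h1, map_add, LinearMap.map_smul, my_trace_smulRight]
  simp [smul_eq_mul]
  ring

/-- The defect of the Leibniz rule is the same for the left and the right Laplacian: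
`Δ^L_B(FG) − F Δ^L_B G − G Δ^L_B F = Δ^R_B(FG) − F Δ^R_B G − G Δ^R_B F`. -/
theorem laplacian_leibniz_defect_left_eq_right
    {E : Type*} [NormedAddCommGroup E] [NormedSpace ℝ E] [FiniteDimensional ℝ E]
    (B : E → (E →ₗ[ℝ] E →ₗ[ℝ] ℝ))
    (hB1 : ∀ x v, (∀ w, B x v w = 0) → v = 0)
    (hB2 : ∀ x w, (∀ v, B x v w = 0) → w = 0)
    (F G : E → ℝ) (hF : Differentiable ℝ F) (hG : Differentiable ℝ G)
    (gF gG g hF' hG' h : E → E)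
    (hgF : Differentiable ℝ gF) (hgG : Differentiable ℝ gG) (hg : Differentiable ℝ g)
    (hhF : Differentiable ℝ hF') (hhG : Differentiable ℝ hG') (hh : Differentiable ℝ h)
    (hgFgrad : ∀ x w, B x (gF x) w = fderiv ℝ F x w)
    (hgGgrad : ∀ x w, B x (gG x) w = fderiv ℝ G x w)
    (hggrad : ∀ x w, B x (g x) w = fderiv ℝ (fun y => F y * G y) x w)
    (hhFgrad : ∀ x w, B x w (hF' x) = fderiv ℝ F x w)
    (hhGgrad : ∀ x w, B x w (hG' x) = fderiv ℝ G x w)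
    (hhgrad : ∀ x w, B x w (h x) = fderiv ℝ (fun y => F y * G y) x w) :
    ∀ x, LinearMap.trace ℝ E (fderiv ℝ g x).toLinearMap -
        F x * LinearMap.trace ℝ E (fderiv ℝ gG x).toLinearMap -
        G x * LinearMap.trace ℝ E (fderiv ℝ gF x).toLinearMap =
      LinearMap.trace ℝ E (fderiv ℝ h x).toLinearMap -
        F x * LinearMap.trace ℝ E (fderiv ℝ hG' x).toLinearMap -
        G x * LinearMap.trace ℝ E (fderiv ℝ hF' x).toLinearMap := by
  have hmul : ∀ (y : E) (w : E), fderiv ℝ (fun y => F y * G y) y w =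
      F y * fderiv ℝ G y w + G y * fderiv ℝ F y w := by
    intro y w
    rw [fderiv_fun_mul (hF y) (hG y)]
    simp [smul_eq_mul]
  -- identify g and h pointwise
  have hgeq : g = fun y => F y • gG y + G y • gF y := by
    funext y
    have h0 : g y - (F y • gG y + G y • gF y) = 0 := by
      apply hB1 y
      intro w
      simp only [map_sub, map_add, LinearMap.map_smul, LinearMap.sub_apply, LinearMap.add_apply,
        LinearMap.smul_apply, hggrad, hgGgrad, hgFgrad, hmul, smul_eq_mul]
      ring
    exact sub_eq_zero.mp h0
  have hheq : h = fun y => F y • hG' y + G y • hF' y := by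
    funext y
    have h0 : h y - (F y • hG' y + G y • hF' y) = 0 := by
      apply hB2 y
      intro v
      have e1 : (B y v) (h y - (F y • hG' y + G y • hF' y)) =
          (B y v) (h y) - (F y * (B y v) (hG' y) + G y * (B y v) (hF' y)) := by
        simp [smul_eq_mul]
      rw [e1, hhgrad, hhGgrad, hhFgrad, hmul]
      ring
    exact sub_eq_zero.mp h0
  intro x
  -- compute traces
  have tg : LinearMap.trace ℝ E (fderiv ℝ g x).toLinearMap =
      (fderiv ℝ F x (gG x) + F x * LinearMap.trace ℝ E (fderiv ℝ gG x).toLinearMap) +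
      (fderiv ℝ G x (gF x) + G x * LinearMap.trace ℝ E (fderiv ℝ gF x).toLinearMap) := by
    rw [hgeq]
    have hd1 : Differentiable ℝ (fun y => F y • gG y) := hF.smul hgG
    have hd2 : Differentiable ℝ (fun y => G y • gF y) := hG.smul hgF
    have : fderiv ℝ (fun y => F y • gG y + G y • gF y) x =
        fderiv ℝ (fun y => F y • gG y) x + fderiv ℝ (fun y => G y • gF y) x :=
      fderiv_add (hd1 x) (hd2 x)
    rw [this]
    have : ((fderiv ℝ (fun y => F y • gG y) x + fderiv ℝ (fun y => G y • gF y) x).toLinearMap) =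
        (fderiv ℝ (fun y => F y • gG y) x).toLinearMap +
        (fderiv ℝ (fun y => G y • gF y) x).toLinearMap := rfl
    rw [this, map_add, my_trace_fderiv_smul F gG hF hgG x, my_trace_fderiv_smul G gF hG hgF x]
  have th : LinearMap.trace ℝ E (fderiv ℝ h x).toLinearMap =
      (fderiv ℝ F x (hG' x) + F x * LinearMap.trace ℝ E (fderiv ℝ hG' x).toLinearMap) +
      (fderiv ℝ G x (hF' x) + G x * LinearMap.trace ℝ E (fderiv ℝ hF' x).toLinearMap) := by
    rw [hheq]
    have hd1 : Differentiable ℝ (fun y => F y • hG' y) := hF.smul hhG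
    have hd2 : Differentiable ℝ (fun y => G y • hF' y) := hG.smul hhF
    have : fderiv ℝ (fun y => F y • hG' y + G y • hF' y) x =
        fderiv ℝ (fun y => F y • hG' y) x + fderiv ℝ (fun y => G y • hF' y) x :=
      fderiv_add (hd1 x) (hd2 x)
    rw [this]
    have : ((fderiv ℝ (fun y => F y • hG' y) x + fderiv ℝ (fun y => G y • hF' y) x).toLinearMap) =
        (fderiv ℝ (fun y => F y • hG' y) x).toLinearMap +
        (fderiv ℝ (fun y => G y • hF' y) x).toLinearMap := rfl
    rw [this, map_add, my_trace_fderiv_smul F hG' hF hhG x, my_trace_fderiv_smul G hF' hG hhF x]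
  rw [tg, th]
  have e1 : fderiv ℝ F x (gG x) = fderiv ℝ G x (hF' x) := by
    rw [← hhFgrad x (gG x), ← hgGgrad x (hF' x)]
  have e2 : fderiv ℝ G x (gF x) = fderiv ℝ F x (hG' x) := by
    rw [← hhGgrad x (gF x), ← hgFgrad x (hG' x)]
  rw [e1, e2]
  ring
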